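/- The play operator has dense image in the space of continuous piecewise linear functions with respect to the uniform norm: for every continuous piecewise linear x : [0,T] → ℝ with x(0) = x₀, there exists a sequence of continuous piecewise linear functions vʲ with |vʲ(0) - x₀| ≤ ρ such that 𝒫[vʲ, x₀] → x in L^∞(0,T) as j → ∞. -/

import Mathlib

open MeasureTheory Set Filter

/-- `f` is absolutely continuous on `[0,T]`: it is the integral of an integrable function. -/
def AbsContOn (T : ℝ) (f : ℝ → ℝ) : Prop :=
  ∃ f' : ℝ → ℝ, MeasureTheory.IntegrableOn f' (Set.Icc 0 T) ∧
    ∀ t ∈ Set.Icc (0:ℝ) T, f t = f 0 + ∫ s in Set.Ioc (0:ℝ) t, f' s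

/-- `w` is the output of the scalar play operator with parameter `ρ` on `[0,T]`,
applied to the input `u` with initial state `w₀`, characterized by the
variational inequality: `w` is absolutely continuous, `w 0 = w₀`,
`|u - w| ≤ ρ` on `[0,T]`, and `w' (u - w - v) ≥ 0` a.e. for all `|v| ≤ ρ`. -/
def IsPlayOutput (ρ T : ℝ) (u : ℝ → ℝ) (w₀ : ℝ) (w : ℝ → ℝ) : Prop :=
  w 0 = w₀ ∧
  ∃ w' : ℝ → ℝ, MeasureTheory.IntegrableOn w' (Set.Icc 0 T) ∧
    (∀ t ∈ Set.Icc (0:ℝ) T, w t = w₀ + ∫ s in Set.Ioc (0:ℝ) t, w' s) ∧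
    (∀ t ∈ Set.Icc (0:ℝ) T, |u t - w t| ≤ ρ) ∧
    (∀ᵐ t ∂(MeasureTheory.volume.restrict (Set.Icc (0:ℝ) T)),
      ∀ v : ℝ, |v| ≤ ρ → 0 ≤ w' t * (u t - w t - v))

/-- `f` is continuous piecewise linear (affine) on `[0,T]`. -/
def PWLinearOn (T : ℝ) (f : ℝ → ℝ) : Prop :=
  ContinuousOn f (Set.Icc 0 T) ∧
  ∃ (N : ℕ) (τ : ℕ → ℝ), τ 0 = 0 ∧ τ N = T ∧ (∀ i < N, τ i < τ (i+1)) ∧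
    ∀ i < N, ∃ a b : ℝ, ∀ s ∈ Set.Icc (τ i) (τ (i+1)), f s = a * s + b





namespace PlayAux

/-- clamp function: ramps from 0 to β - α between α and β. -/
noncomputable def clp (α β t : ℝ) : ℝ := max (min t β - α) 0

lemma clp_of_le {α β t : ℝ} (h : t ≤ α) : clp α β t = 0 := by
  have : min t β - α ≤ 0 := by
    have := min_le_left t β; linarith
  simp [clp, max_eq_right this]

lemma clp_of_mem {α β t : ℝ} (h1 : α ≤ t) (h2 : t ≤ β) : clp α β t = t - α := by
  have : min t β = t := min_eq_left h2
  simp [clp, this, max_eq_left (by linarith : (0:ℝ) ≤ t - α)]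

lemma clp_of_ge {α β t : ℝ} (h1 : β ≤ t) (h2 : α ≤ β) : clp α β t = β - α := by
  have : min t β = β := min_eq_right h1
  simp [clp, this, max_eq_left (by linarith : (0:ℝ) ≤ β - α)]

lemma clp_nonneg (α β t : ℝ) : 0 ≤ clp α β t := le_max_right _ _

lemma clp_le_sub {α β : ℝ} (h : α ≤ β) (t : ℝ) : clp α β t ≤ β - α := by
  have h1 : min t β - α ≤ β - α := by
    have := min_le_right t β; linarith
  exact max_le h1 (by linarith)

lemma clp_continuous (α β : ℝ) : Continuous (clp α β) :=
  ((continuous_id.min continuous_const).sub continuous_const).max continuous_const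

/-- Affine on a set. -/
def AffOn (s : Set ℝ) (f : ℝ → ℝ) : Prop := ∃ a b : ℝ, ∀ t ∈ s, f t = a * t + b

lemma AffOn.add {s : Set ℝ} {f g : ℝ → ℝ} (hf : AffOn s f) (hg : AffOn s g) :
    AffOn s (fun t => f t + g t) := by
  obtain ⟨a1, b1, h1⟩ := hf; obtain ⟨a2, b2, h2⟩ := hg
  exact ⟨a1 + a2, b1 + b2, fun t ht => by simp only []; rw [h1 t ht, h2 t ht]; ring⟩

lemma AffOn.const (s : Set ℝ) (c : ℝ) : AffOn s (fun _ => c) := ⟨0, c, fun t _ => by ring⟩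

lemma AffOn.const_mul {s : Set ℝ} {f : ℝ → ℝ} (hf : AffOn s f) (c : ℝ) :
    AffOn s (fun t => c * f t) := by
  obtain ⟨a, b, h⟩ := hf
  exact ⟨c * a, c * b, fun t ht => by simp only []; rw [h t ht]; ring⟩

lemma AffOn.sum {s : Set ℝ} {ι : Type*} (u : Finset ι) (F : ι → ℝ → ℝ)
    (h : ∀ k ∈ u, AffOn s (F k)) : AffOn s (fun t => ∑ k ∈ u, F k t) := by
  classical
  induction u using Finset.induction_on with
  | empty => simpa using AffOn.const s 0
  | @insert i u hi ih =>
      have h1 : AffOn s (F i) := h i (Finset.mem_insert_self i u)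
      have h2 : AffOn s (fun t => ∑ k ∈ u, F k t) :=
        ih (fun k hk => h k (Finset.mem_insert_of_mem hk))
      simpa [Finset.sum_insert hi] using h1.add h2

lemma mono_of_inc {f : ℕ → ℝ} {M : ℕ} (hinc : ∀ i < M, f i < f (i+1)) :
    ∀ p q, p ≤ q → q ≤ M → f p ≤ f q := by
  intro p q hpq hqM
  induction q with
  | zero => have : p = 0 := Nat.le_zero.mp hpq; simp [this]
  | succ n ih =>
      rcases Nat.lt_or_ge p (n+1) with h | h
      · exact (ih (Nat.lt_succ_iff.mp h) (by omega)).trans (le_of_lt (hinc n (by omega)))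
      · have : p = n + 1 := le_antisymm hpq h
        simp [this]

lemma exists_piece {f : ℕ → ℝ} {M : ℕ} (hM : 0 < M) {t : ℝ}
    (h0 : f 0 ≤ t) (hMt : t ≤ f M) : ∃ i < M, f i ≤ t ∧ t ≤ f (i+1) := by
  induction M with
  | zero => omega
  | succ n ih =>
      rcases Nat.eq_zero_or_pos n with hn | hn
      · exact ⟨0, by omega, by simpa [hn] using h0, by simpa [hn] using hMt⟩
      · by_cases h : f n ≤ t
        · exact ⟨n, Nat.lt_succ_self n, h, hMt⟩
        · obtain ⟨i, hi, h1, h2⟩ := ih hn (le_of_not_ge h)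
          exact ⟨i, by omega, h1, h2⟩

lemma integral_indicator_Ioc (c α β t : ℝ) (hα : 0 < α) :
    ∫ s in Set.Ioc (0:ℝ) t, (Set.Ioc α β).indicator (fun _ => c) s = c * clp α β t := by
  rw [MeasureTheory.setIntegral_indicator measurableSet_Ioc, Set.Ioc_inter_Ioc,
    MeasureTheory.setIntegral_const]
  rw [Real.volume_real_Ioc, smul_eq_mul]
  rw [max_eq_right hα.le]
  rw [clp]; ring

end PlayAux
namespace PlayAux

/-- slope of the modified function on piece `k`. -/
noncomputable def pcf (τ : ℕ → ℝ) (δ : ℝ) (a : ℕ → ℝ) (k : ℕ) : ℝ :=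
  a k * (τ (k+1) - τ k) / (τ (k+1) - τ k - δ)

/-- sign of the slope on piece `k`. -/
noncomputable def sg (a : ℕ → ℝ) (k : ℕ) : ℝ := if 0 ≤ a k then 1 else -1

lemma abs_sg_le (a : ℕ → ℝ) (k : ℕ) : |sg a k| ≤ 1 := by
  unfold sg; split_ifs <;> norm_num

/-- the approximate output: `x` with plateaus of width `δ` inserted. -/
noncomputable def Wf (τ : ℕ → ℝ) (δ : ℝ) (a : ℕ → ℝ) (N : ℕ) (x₀ t : ℝ) : ℝ :=
  x₀ + ∑ k ∈ Finset.range N, pcf τ δ a k * clp (τ k + δ) (τ (k+1)) t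

/-- interpolated sign function. -/
noncomputable def Sf (τ : ℕ → ℝ) (δ : ℝ) (a : ℕ → ℝ) (N : ℕ) (t : ℝ) : ℝ :=
  sg a 0 + ∑ l ∈ Finset.range (N-1),
    ((sg a (l+1) - sg a l)/δ) * clp (τ (l+1)) (τ (l+1) + δ) t

/-- the derivative of `Wf`. -/
noncomputable def gf (τ : ℕ → ℝ) (δ : ℝ) (a : ℕ → ℝ) (N : ℕ) (s : ℝ) : ℝ :=
  ∑ k ∈ Finset.range N, (Set.Ioc (τ k + δ) (τ (k+1))).indicator (fun _ => pcf τ δ a k) s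

end PlayAux
namespace PlayAux

lemma key (ρ T : ℝ) (hρ : 0 < ρ) (N : ℕ) (hN : 0 < N) (τ : ℕ → ℝ)
    (hτ0 : τ 0 = 0) (hτN : τ N = T) (hinc : ∀ i < N, τ i < τ (i+1))
    (x : ℝ → ℝ) (a b : ℕ → ℝ)
    (hab : ∀ i < N, ∀ s ∈ Set.Icc (τ i) (τ (i+1)), x s = a i * s + b i)
    (x₀ : ℝ) (hx₀ : x 0 = x₀) (δ : ℝ) (hδ : 0 < δ)
    (hgap : ∀ i < N, δ < τ (i+1) - τ i) :
    PWLinearOn T (fun t => Wf τ δ a N x₀ t + ρ * Sf τ δ a N t) ∧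
    |(Wf τ δ a N x₀ 0 + ρ * Sf τ δ a N 0) - x₀| ≤ ρ ∧
    IsPlayOutput ρ T (fun t => Wf τ δ a N x₀ t + ρ * Sf τ δ a N t) x₀ (Wf τ δ a N x₀) ∧
    ∀ t ∈ Set.Icc (0:ℝ) T, |Wf τ δ a N x₀ t - x t| ≤ (∑ k ∈ Finset.range N, |a k|) * δ := by
  have hτmono : ∀ p q, p ≤ q → q ≤ N → τ p ≤ τ q := mono_of_inc hinc
  have hτnn : ∀ i, i ≤ N → 0 ≤ τ i := fun i hi => hτ0 ▸ hτmono 0 i (Nat.zero_le _) hi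
  have hLpos : ∀ i < N, 0 < τ (i+1) - τ i - δ := fun i hi => by
    have := hgap i hi; linarith
  have hT0 : 0 ≤ T := by rw [← hτN]; exact hτnn N le_rfl
  -- basic algebra facts
  have hpcmul : ∀ k < N, pcf τ δ a k * (τ (k+1) - τ k - δ) = a k * (τ (k+1) - τ k) := by
    intro k hk
    rw [pcf, div_mul_cancel₀ _ (hLpos k hk).ne']
  have hxstep : ∀ k < N, x (τ (k+1)) - x (τ k) = a k * (τ (k+1) - τ k) := by
    intro k hk
    rw [hab k hk (τ k) ⟨le_rfl, (hinc k hk).le⟩,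
      hab k hk (τ (k+1)) ⟨(hinc k hk).le, le_rfl⟩]
    ring
  -- value of W at 0
  have hW0 : Wf τ δ a N x₀ 0 = x₀ := by
    rw [Wf]
    have hz : ∀ k ∈ Finset.range N, pcf τ δ a k * clp (τ k + δ) (τ (k+1)) 0 = 0 := by
      intro k hk
      have hk' : k < N := Finset.mem_range.mp hk
      rw [clp_of_le (by have := hτnn k hk'.le; linarith : (0:ℝ) ≤ τ k + δ)]
      ring
    rw [Finset.sum_congr rfl hz, Finset.sum_const_zero, add_zero]
  -- value of W on piece i
  have hWpiece : ∀ i < N, ∀ t, τ i ≤ t → t ≤ τ (i+1) →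
      Wf τ δ a N x₀ t = x (τ i) + pcf τ δ a i * clp (τ i + δ) (τ (i+1)) t := by
    intro i hi t ht1 ht2
    rw [Wf]
    have hsub : Finset.range (i+1) ⊆ Finset.range N := Finset.range_subset_range.mpr hi
    have hz : ∀ k ∈ Finset.range N, k ∉ Finset.range (i+1) →
        pcf τ δ a k * clp (τ k + δ) (τ (k+1)) t = 0 := by
      intro k hk hk'
      have hik : i + 1 ≤ k := by simpa using hk'
      have hkN : k < N := Finset.mem_range.mp hk
      have h1 : τ (i+1) ≤ τ k := hτmono (i+1) k hik hkN.le
      rw [clp_of_le (by linarith : t ≤ τ k + δ)]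
      ring
    rw [← Finset.sum_subset hsub hz, Finset.sum_range_succ]
    have hcongr : ∀ k ∈ Finset.range i,
        pcf τ δ a k * clp (τ k + δ) (τ (k+1)) t = x (τ (k+1)) - x (τ k) := by
      intro k hk
      have hki : k < i := Finset.mem_range.mp hk
      have hkN : k < N := lt_trans hki hi
      have hβ : τ (k+1) ≤ t := le_trans (hτmono (k+1) i (by omega) hi.le) ht1
      rw [clp_of_ge hβ (by linarith [hgap k hkN] : τ k + δ ≤ τ (k+1))]
      calc pcf τ δ a k * (τ (k+1) - (τ k + δ))
          = pcf τ δ a k * (τ (k+1) - τ k - δ) := by ring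
        _ = a k * (τ (k+1) - τ k) := hpcmul k hkN
        _ = x (τ (k+1)) - x (τ k) := (hxstep k hkN).symm
    rw [Finset.sum_congr rfl hcongr, Finset.sum_range_sub (fun n => x (τ n)), hτ0, hx₀]
    ring
  -- value of S strictly inside a ramp piece
  have hSIoc : ∀ k < N, ∀ t, τ k + δ < t → t ≤ τ (k+1) → Sf τ δ a N t = sg a k := by
    intro k hk t h1 h2
    rw [Sf]
    have hsub : Finset.range k ⊆ Finset.range (N-1) := Finset.range_subset_range.mpr (by omega)
    have hz : ∀ l ∈ Finset.range (N-1), l ∉ Finset.range k →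
        ((sg a (l+1) - sg a l)/δ) * clp (τ (l+1)) (τ (l+1) + δ) t = 0 := by
      intro l hl hl'
      have hkl : k ≤ l := by simpa using hl'
      have hlN : l < N - 1 := Finset.mem_range.mp hl
      have hle : t ≤ τ (l+1) := le_trans h2 (hτmono (k+1) (l+1) (by omega) (by omega))
      rw [clp_of_le hle]
      ring
    rw [← Finset.sum_subset hsub hz]
    have hcongr : ∀ l ∈ Finset.range k,
        ((sg a (l+1) - sg a l)/δ) * clp (τ (l+1)) (τ (l+1) + δ) t = sg a (l+1) - sg a l := by
      intro l hl
      have hlk : l < k := Finset.mem_range.mp hl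
      have hge : τ (l+1) + δ ≤ t := by
        have := hτmono (l+1) k (by omega) hk.le
        linarith
      rw [clp_of_ge hge (by linarith)]
      have hδ' : τ (l+1) + δ - τ (l+1) = δ := by ring
      rw [hδ']
      field_simp
    rw [Finset.sum_congr rfl hcongr, Finset.sum_range_sub (fun n => sg a n)]
    ring
  -- |S| ≤ 1 on [0,T]
  have hSabs : ∀ t, 0 ≤ t → t ≤ T → |Sf τ δ a N t| ≤ 1 := by
    intro t ht0 htT
    obtain ⟨i, hiN, ht1, ht2⟩ := exists_piece (f := τ) (t := t) hN (by rw [hτ0]; exact ht0)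
      (by rw [hτN]; exact htT)
    rw [Sf]
    rcases Nat.eq_zero_or_pos i with hi0 | hip
    · subst hi0
      have hz : ∀ l ∈ Finset.range (N-1),
          ((sg a (l+1) - sg a l)/δ) * clp (τ (l+1)) (τ (l+1) + δ) t = 0 := by
        intro l hl
        have hlN : l < N - 1 := Finset.mem_range.mp hl
        have : t ≤ τ (l+1) := le_trans ht2 (hτmono 1 (l+1) (by omega) (by omega))
        rw [clp_of_le this]
        ring
      rw [Finset.sum_congr rfl hz, Finset.sum_const_zero, add_zero]
      exact abs_sg_le a 0
    · obtain ⟨p, rfl⟩ : ∃ p, i = p + 1 := ⟨i - 1, by omega⟩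
      have hsub : Finset.range (p+1) ⊆ Finset.range (N-1) := Finset.range_subset_range.mpr (by omega)
      have hz : ∀ l ∈ Finset.range (N-1), l ∉ Finset.range (p+1) →
          ((sg a (l+1) - sg a l)/δ) * clp (τ (l+1)) (τ (l+1) + δ) t = 0 := by
        intro l hl hl'
        have hpl : p + 1 ≤ l := by simpa using hl'
        have hlN : l < N - 1 := Finset.mem_range.mp hl
        have : t ≤ τ (l+1) := le_trans ht2 (hτmono (p+2) (l+1) (by omega) (by omega))
        rw [clp_of_le this]
        ring
      rw [← Finset.sum_subset hsub hz, Finset.sum_range_succ]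
      have hcongr : ∀ l ∈ Finset.range p,
          ((sg a (l+1) - sg a l)/δ) * clp (τ (l+1)) (τ (l+1) + δ) t = sg a (l+1) - sg a l := by
        intro l hl
        have hlp : l < p := Finset.mem_range.mp hl
        have hl1N : l + 1 < N := by omega
        have h1 : τ (l+1) + δ ≤ τ (p+1) := by
          have hg := hgap (l+1) hl1N
          have hm := hτmono (l+2) (p+1) (by omega) (by omega)
          linarith
        rw [clp_of_ge (le_trans h1 ht1) (by linarith)]
        have hδ' : τ (l+1) + δ - τ (l+1) = δ := by ring
        rw [hδ']
        field_simp
      rw [Finset.sum_congr rfl hcongr, Finset.sum_range_sub (fun n => sg a n)]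
      set θ := clp (τ (p+1)) (τ (p+1) + δ) t with hθdef
      have hθ0 : 0 ≤ θ := clp_nonneg _ _ _
      have hθδ : θ ≤ δ := by
        have := clp_le_sub (by linarith : τ (p+1) ≤ τ (p+1) + δ) t
        rw [← hθdef] at this
        linarith
      have hp1 := abs_le.mp (abs_sg_le a p)
      have hp2 := abs_le.mp (abs_sg_le a (p+1))
      have hμ : ((sg a (p+1) - sg a p)/δ * θ) * δ = (sg a (p+1) - sg a p) * θ := by
        field_simp
      rw [abs_le]
      constructor <;> nlinarith [hμ, mul_nonneg (by linarith : (0:ℝ) ≤ 1 - sg a (p+1)) hθ0,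
        mul_nonneg (by linarith : (0:ℝ) ≤ 1 + sg a (p+1)) hθ0,
        mul_nonneg (by linarith : (0:ℝ) ≤ 1 - sg a p) (by linarith : (0:ℝ) ≤ δ - θ),
        mul_nonneg (by linarith : (0:ℝ) ≤ 1 + sg a p) (by linarith : (0:ℝ) ≤ δ - θ)]
  -- integral representation
  have hWint : ∀ t ∈ Set.Icc (0:ℝ) T,
      Wf τ δ a N x₀ t = x₀ + ∫ s in Set.Ioc (0:ℝ) t, gf τ δ a N s := by
    intro t ht
    rw [Wf]
    congr 1
    have hint : ∀ k ∈ Finset.range N,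
        MeasureTheory.Integrable
          (fun s => (Set.Ioc (τ k + δ) (τ (k+1))).indicator (fun _ => pcf τ δ a k) s)
          (MeasureTheory.volume.restrict (Set.Ioc (0:ℝ) t)) := by
      intro k _
      exact (MeasureTheory.integrableOn_const (C := pcf τ δ a k) measure_Ioc_lt_top.ne).indicator
        measurableSet_Ioc
    calc ∑ k ∈ Finset.range N, pcf τ δ a k * clp (τ k + δ) (τ (k+1)) t
        = ∑ k ∈ Finset.range N,
            ∫ s in Set.Ioc (0:ℝ) t,
              (Set.Ioc (τ k + δ) (τ (k+1))).indicator (fun _ => pcf τ δ a k) s := by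
          refine Finset.sum_congr rfl fun k hk => ?_
          have hk' : k < N := Finset.mem_range.mp hk
          rw [integral_indicator_Ioc _ _ _ _ (by have := hτnn k hk'.le; linarith)]
      _ = ∫ s in Set.Ioc (0:ℝ) t, gf τ δ a N s := by
          rw [← MeasureTheory.integral_finset_sum _ hint]
          rfl
  have hgint : MeasureTheory.IntegrableOn (gf τ δ a N) (Set.Icc (0:ℝ) T) := by
    apply MeasureTheory.integrable_finset_sum
    intro k _
    exact (MeasureTheory.integrableOn_const (C := pcf τ δ a k) measure_Icc_lt_top.ne).indicator
      measurableSet_Ioc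
  -- the variational inequality, pointwise
  have hVI : ∀ t : ℝ, ∀ ξ : ℝ, |ξ| ≤ ρ →
      0 ≤ gf τ δ a N t * ((Wf τ δ a N x₀ t + ρ * Sf τ δ a N t) - Wf τ δ a N x₀ t - ξ) := by
    intro t ξ hξ
    have hsimp : (Wf τ δ a N x₀ t + ρ * Sf τ δ a N t) - Wf τ δ a N x₀ t - ξ
        = ρ * Sf τ δ a N t - ξ := by ring
    rw [hsimp]
    by_cases hg : gf τ δ a N t = 0
    · rw [hg, zero_mul]
    · obtain ⟨k, hk, hne⟩ := Finset.exists_ne_zero_of_sum_ne_zero hg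
      have hkN : k < N := Finset.mem_range.mp hk
      have hmem : t ∈ Set.Ioc (τ k + δ) (τ (k+1)) := by
        by_contra hmem
        rw [Set.indicator_of_notMem hmem] at hne
        exact hne rfl
      have hval : gf τ δ a N t = pcf τ δ a k := by
        rw [gf, Finset.sum_eq_single k]
        · exact Set.indicator_of_mem hmem _
        · intro l hl hlk
          apply Set.indicator_of_notMem
          intro hmem'
          rcases Nat.lt_or_ge l k with h | h
          · have h2 : τ (l+1) ≤ τ k := hτmono (l+1) k (by omega) hkN.le
            have := hmem'.2
            have := hmem.1
            linarith
          · have hlN : l < N := Finset.mem_range.mp hl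
            have h2 : τ (k+1) ≤ τ l := hτmono (k+1) l (by omega) hlN.le
            have := hmem'.1
            have := hmem.2
            linarith
        · intro h; exact absurd hk h
      rw [hval, hSIoc k hkN t hmem.1 hmem.2]
      have hL : 0 < τ (k+1) - τ k := by have := hinc k hkN; linarith
      have hLδ := hLpos k hkN
      rw [pcf, sg]
      split_ifs with ha
      · have h1 : 0 ≤ a k * (τ (k+1) - τ k) / (τ (k+1) - τ k - δ) :=
          div_nonneg (mul_nonneg ha hL.le) hLδ.le
        have h2 : 0 ≤ ρ * 1 - ξ := by have := (abs_le.mp hξ).2; linarith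
        exact mul_nonneg h1 h2
      · push_neg at ha
        have h1 : a k * (τ (k+1) - τ k) / (τ (k+1) - τ k - δ) ≤ 0 :=
          div_nonpos_iff.mpr (Or.inr ⟨by nlinarith, by linarith⟩)
        have h2 : ρ * (-1) - ξ ≤ 0 := by have := (abs_le.mp hξ).1; linarith
        have := mul_nonneg (neg_nonneg.mpr h1) (neg_nonneg.mpr h2)
        rwa [neg_mul_neg] at this
  -- the uniform error bound
  have hbound : ∀ t ∈ Set.Icc (0:ℝ) T,
      |Wf τ δ a N x₀ t - x t| ≤ (∑ k ∈ Finset.range N, |a k|) * δ := by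
    intro t ht
    obtain ⟨i, hiN, ht1, ht2⟩ := exists_piece (f := τ) (t := t) hN (by rw [hτ0]; exact ht.1)
      (by rw [hτN]; exact ht.2)
    rw [hWpiece i hiN t ht1 ht2]
    have hxt : x t = a i * t + b i := hab i hiN t ⟨ht1, ht2⟩
    have hxτ : x (τ i) = a i * τ i + b i := hab i hiN (τ i) ⟨le_rfl, (hinc i hiN).le⟩
    have hrw : x (τ i) + pcf τ δ a i * clp (τ i + δ) (τ (i+1)) t - x t
        = pcf τ δ a i * clp (τ i + δ) (τ (i+1)) t - a i * (t - τ i) := by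
      rw [hxt, hxτ]; ring
    rw [hrw]
    have hkey : |pcf τ δ a i * clp (τ i + δ) (τ (i+1)) t - a i * (t - τ i)| ≤ |a i| * δ := by
      by_cases hcase : t ≤ τ i + δ
      · rw [clp_of_le hcase, mul_zero, zero_sub, abs_neg, abs_mul]
        refine mul_le_mul_of_nonneg_left ?_ (abs_nonneg _)
        rw [abs_of_nonneg (by linarith : (0:ℝ) ≤ t - τ i)]
        linarith
      · push_neg at hcase
        rw [clp_of_mem hcase.le ht2]
        have hq := hpcmul i hiN
        have hLδ := hLpos i hiN
        have hexpr : (pcf τ δ a i * (t - (τ i + δ)) - a i * (t - τ i)) * (τ (i+1) - τ i - δ)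
            = a i * δ * ((t - τ i) - (τ (i+1) - τ i)) := by
          linear_combination (t - τ i - δ) * hq
        have habs : |pcf τ δ a i * (t - (τ i + δ)) - a i * (t - τ i)| * (τ (i+1) - τ i - δ)
            = |a i| * δ * (τ (i+1) - t) := by
          rw [← abs_of_pos hLδ, ← abs_mul, hexpr,
            show a i * δ * (t - τ i - (τ (i+1) - τ i)) = a i * (δ * (t - τ (i+1))) by ring,
            abs_mul, abs_mul, abs_of_pos hδ,
            abs_of_nonpos (by linarith : t - τ (i+1) ≤ 0)]
          ring
        have h3 : |a i| * δ * (τ (i+1) - t) ≤ (|a i| * δ) * (τ (i+1) - τ i - δ) := by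
          refine mul_le_mul_of_nonneg_left (by linarith) (by positivity)
        exact le_of_mul_le_mul_right (by linarith [habs, h3]) hLδ
    refine le_trans hkey (mul_le_mul_of_nonneg_right ?_ hδ.le)
    exact Finset.single_le_sum (f := fun k => |a k|) (fun k _ => abs_nonneg _)
      (Finset.mem_range.mpr hiN)
  -- piecewise linearity
  have hcontW : Continuous (Wf τ δ a N x₀) := by
    apply continuous_const.add
    exact continuous_finset_sum _ fun k _ => continuous_const.mul (clp_continuous _ _)
  have hcontS : Continuous (Sf τ δ a N) := by
    apply continuous_const.add
    exact continuous_finset_sum _ fun l _ => continuous_const.mul (clp_continuous _ _)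
  set τ' : ℕ → ℝ := fun m => if m % 2 = 0 then τ (m/2) else τ (m/2) + δ with hτ'def
  have hτ'even : ∀ k, τ' (2*k) = τ k := by
    intro k
    have h2 : 2*k/2 = k := by omega
    simp only [hτ'def]
    rw [if_pos (by omega), h2]
  have hτ'odd : ∀ k, τ' (2*k+1) = τ k + δ := by
    intro k
    have h2 : (2*k+1)/2 = k := by omega
    simp only [hτ'def]
    rw [if_neg (by omega), h2]
  have hτ'inc : ∀ m < 2*N, τ' m < τ' (m+1) := by
    intro m hm
    rcases Nat.even_or_odd m with ⟨p, hp⟩ | ⟨p, hp⟩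
    · have hm' : m = 2*p := by omega
      subst hm'
      rw [hτ'even p, show 2*p+1 = 2*p+1 from rfl, hτ'odd p]
      linarith
    · have hm' : m = 2*p+1 := by omega
      subst hm'
      rw [hτ'odd p, show 2*p+1+1 = 2*(p+1) by ring, hτ'even (p+1)]
      have := hgap p (by omega)
      linarith
  have hτ'mono : ∀ p q, p ≤ q → q ≤ 2*N → τ' p ≤ τ' q := mono_of_inc hτ'inc
  have haffW : ∀ m < 2*N, AffOn (Set.Icc (τ' m) (τ' (m+1))) (Wf τ δ a N x₀) := by
    intro m hm
    have h1 : AffOn (Set.Icc (τ' m) (τ' (m+1)))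
        (fun t => x₀ + ∑ k ∈ Finset.range N, pcf τ δ a k * clp (τ k + δ) (τ (k+1)) t) := by
      refine (AffOn.const _ x₀).add (AffOn.sum _ _ fun k hk => ?_)
      have hkN : k < N := Finset.mem_range.mp hk
      refine AffOn.const_mul ?_ _
      rcases show m + 1 ≤ 2*k+1 ∨ m = 2*k+1 ∨ 2*k+2 ≤ m by omega with h | h | h
      · refine ⟨0, 0, fun t ht => ?_⟩
        have hle : t ≤ τ k + δ := by
          have := hτ'mono (m+1) (2*k+1) h (by omega)
          rw [hτ'odd k] at this
          exact le_trans ht.2 this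
        rw [clp_of_le hle]
        ring
      · subst h
        refine ⟨1, -(τ k + δ), fun t ht => ?_⟩
        rw [hτ'odd k, show 2*k+1+1 = 2*(k+1) by ring, hτ'even (k+1)] at ht
        rw [clp_of_mem ht.1 ht.2]
        ring
      · refine ⟨0, τ (k+1) - (τ k + δ), fun t ht => ?_⟩
        have hge : τ (k+1) ≤ t := by
          have h2 : τ' (2*(k+1)) ≤ τ' m := hτ'mono (2*(k+1)) m (by omega) (by omega)
          rw [hτ'even (k+1)] at h2
          exact le_trans h2 ht.1
        rw [clp_of_ge hge (by have := hgap k hkN; linarith)]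
        ring
    exact h1
  have haffS : ∀ m < 2*N, AffOn (Set.Icc (τ' m) (τ' (m+1))) (Sf τ δ a N) := by
    intro m hm
    have h1 : AffOn (Set.Icc (τ' m) (τ' (m+1)))
        (fun t => sg a 0 + ∑ l ∈ Finset.range (N-1),
          ((sg a (l+1) - sg a l)/δ) * clp (τ (l+1)) (τ (l+1) + δ) t) := by
      refine (AffOn.const _ _).add (AffOn.sum _ _ fun l hl => ?_)
      have hlN : l < N - 1 := Finset.mem_range.mp hl
      refine AffOn.const_mul ?_ _
      rcases show m + 1 ≤ 2*l+2 ∨ m = 2*l+2 ∨ 2*l+3 ≤ m by omega with h | h | h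
      · refine ⟨0, 0, fun t ht => ?_⟩
        have hle : t ≤ τ (l+1) := by
          have h2 := hτ'mono (m+1) (2*(l+1)) (by omega) (by omega)
          rw [hτ'even (l+1)] at h2
          exact le_trans ht.2 h2
        rw [clp_of_le hle]
        ring
      · subst h
        refine ⟨1, -(τ (l+1)), fun t ht => ?_⟩
        rw [show 2*l+2 = 2*(l+1) by ring, hτ'even (l+1)] at ht
        have ht2 : t ≤ τ (l+1) + δ := by
          have h2 : τ' (2*(l+1)+1) = τ (l+1) + δ := hτ'odd (l+1)
          rw [h2] at ht
          exact ht.2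
        rw [clp_of_mem ht.1 ht2]
        ring
      · refine ⟨0, δ, fun t ht => ?_⟩
        have hge : τ (l+1) + δ ≤ t := by
          have h2 : τ' (2*(l+1)+1) ≤ τ' m := hτ'mono (2*(l+1)+1) m (by omega) (by omega)
          rw [hτ'odd (l+1)] at h2
          exact le_trans h2 ht.1
        rw [clp_of_ge hge (by linarith)]
        ring
    exact h1
  have hPWV : PWLinearOn T (fun t => Wf τ δ a N x₀ t + ρ * Sf τ δ a N t) := by
    constructor
    · exact (hcontW.add (continuous_const.mul hcontS)).continuousOn
    · refine ⟨2*N, τ', ?_, ?_, hτ'inc, ?_⟩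
      · have := hτ'even 0
        simpa [hτ0] using this
      · have := hτ'even N
        rw [hτN] at this
        exact this
      · intro m hm
        obtain ⟨aW, bW, hW⟩ := haffW m hm
        obtain ⟨aS, bS, hS⟩ := haffS m hm
        refine ⟨aW + ρ * aS, bW + ρ * bS, fun s hs => ?_⟩
        show Wf τ δ a N x₀ s + ρ * Sf τ δ a N s = (aW + ρ * aS) * s + (bW + ρ * bS)
        rw [hW s hs, hS s hs]
        ring
  have hSabs' : ∀ t ∈ Set.Icc (0:ℝ) T, |ρ * Sf τ δ a N t| ≤ ρ := by
    intro t ht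
    rw [abs_mul, abs_of_pos hρ]
    calc ρ * |Sf τ δ a N t| ≤ ρ * 1 :=
      mul_le_mul_of_nonneg_left (hSabs t ht.1 ht.2) hρ.le
    _ = ρ := mul_one ρ
  refine ⟨hPWV, ?_, ?_, hbound⟩
  · rw [hW0]
    have h0 : (0:ℝ) ∈ Set.Icc (0:ℝ) T := ⟨le_rfl, hT0⟩
    calc |x₀ + ρ * Sf τ δ a N 0 - x₀| = |ρ * Sf τ δ a N 0| := by ring_nf
      _ ≤ ρ := hSabs' 0 h0
  · refine ⟨hW0, gf τ δ a N, hgint, hWint, ?_, ?_⟩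
    · intro t ht
      have : Wf τ δ a N x₀ t + ρ * Sf τ δ a N t - Wf τ δ a N x₀ t = ρ * Sf τ δ a N t := by
        ring
      rw [this]
      exact hSabs' t ht
    · exact Filter.Eventually.of_forall fun t => hVI t

end PlayAux

/-- Density lemma: the play operator has dense image (in the uniform norm) in the space
of continuous piecewise linear functions: for every such `x` with `x 0 = x₀` there are
continuous piecewise linear inputs `vʲ`, admissible for `x₀`, with `𝒫[vʲ,x₀] → x`
uniformly on `[0,T]`. -/
theorem play_dense_image_pwlinear (ρ T : ℝ) (hρ : 0 < ρ) (hT : 0 < T)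
    (x : ℝ → ℝ) (hx : PWLinearOn T x) (x₀ : ℝ) (hx₀ : x 0 = x₀) :
    ∃ v : ℕ → ℝ → ℝ, ∃ w : ℕ → ℝ → ℝ,
      (∀ j, PWLinearOn T (v j)) ∧
      (∀ j, |v j 0 - x₀| ≤ ρ) ∧
      (∀ j, IsPlayOutput ρ T (v j) x₀ (w j)) ∧
      TendstoUniformlyOn (fun j t => w j t) x Filter.atTop (Set.Icc 0 T) := by
  classical
  obtain ⟨hxc, N, τ, hτ0, hτN, hinc, hpieces⟩ := hx
  have hN : 0 < N := by
    by_contra h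
    have hN0 : N = 0 := by omega
    rw [hN0, hτ0] at hτN
    linarith
  have hp' : ∀ i : ℕ, ∃ ab : ℝ × ℝ, i < N →
      ∀ s ∈ Set.Icc (τ i) (τ (i+1)), x s = ab.1 * s + ab.2 := by
    intro i
    by_cases h : i < N
    · obtain ⟨a, b, hb⟩ := hpieces i h
      exact ⟨(a, b), fun _ => hb⟩
    · exact ⟨(0, 0), fun h' => absurd h' h⟩
  choose ab hab using hp'
  set a : ℕ → ℝ := fun i => (ab i).1 with hadef
  set b : ℕ → ℝ := fun i => (ab i).2 with hbdef
  have hab' : ∀ i < N, ∀ s ∈ Set.Icc (τ i) (τ (i+1)), x s = a i * s + b i :=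
    fun i hi => hab i hi
  have hne : (Finset.range N).Nonempty := ⟨0, Finset.mem_range.mpr hN⟩
  set m := Finset.inf' (Finset.range N) hne (fun i => τ (i+1) - τ i) with hmdef
  have hm : 0 < m := by
    rw [hmdef]
    rw [Finset.lt_inf'_iff]
    intro i hi
    have := hinc i (Finset.mem_range.mp hi)
    linarith
  have hmle : ∀ i < N, m ≤ τ (i+1) - τ i := fun i hi =>
    Finset.inf'_le _ (Finset.mem_range.mpr hi)
  set δf : ℕ → ℝ := fun j => m / (2*((j:ℝ)+1)) with hδfdef
  have hδpos : ∀ j, 0 < δf j := by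
    intro j
    apply div_pos hm
    positivity
  have hδhalf : ∀ j, δf j ≤ m / 2 := by
    intro j
    apply div_le_div_of_nonneg_left hm.le (by norm_num)
    have : (0:ℝ) ≤ (j:ℝ) := Nat.cast_nonneg j
    linarith
  have hδgap : ∀ j, ∀ i < N, δf j < τ (i+1) - τ i := by
    intro j i hi
    have h1 := hδhalf j
    have h2 := hmle i hi
    linarith
  have hkey := fun j => PlayAux.key ρ T hρ N hN τ hτ0 hτN hinc x a b hab' x₀ hx₀
    (δf j) (hδpos j) (hδgap j)
  refine ⟨fun j => fun t => PlayAux.Wf τ (δf j) a N x₀ t + ρ * PlayAux.Sf τ (δf j) a N t,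
    fun j => PlayAux.Wf τ (δf j) a N x₀,
    fun j => (hkey j).1, fun j => (hkey j).2.1, fun j => (hkey j).2.2.1, ?_⟩
  rw [Metric.tendstoUniformlyOn_iff]
  intro ε hε
  set A := ∑ k ∈ Finset.range N, |a k| with hAdef
  have hconv : Filter.Tendsto (fun j : ℕ => A * δf j) Filter.atTop (nhds 0) := by
    have heq : (fun j : ℕ => A * δf j) = fun j : ℕ => (A * m / 2) * (1/((j:ℝ)+1)) := by
      funext j
      rw [hδfdef]
      simp only []
      have hj : ((j:ℝ)+1) ≠ 0 := by positivity
      field_simp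
    rw [heq]
    have := tendsto_one_div_add_atTop_nhds_zero_nat.const_mul (A * m / 2)
    simpa using this
  have hev : ∀ᶠ j in Filter.atTop, A * δf j < ε := hconv.eventually (gt_mem_nhds hε)
  filter_upwards [hev] with j hj t ht
  have hb := (hkey j).2.2.2 t ht
  rw [Real.dist_eq]
  calc |x t - PlayAux.Wf τ (δf j) a N x₀ t|
      = |PlayAux.Wf τ (δf j) a N x₀ t - x t| := abs_sub_comm _ _
    _ ≤ A * δf j := hb
    _ < ε := hj
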